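/- arXiv:1905.12046 — 4 statements merged into one kernel-verified Lean document; each statement's English description precedes it below -/
import Mathlib

section
/- Let k ≥ 1 be an integer, let p, q ∈ ℂ with p + q = 1, let x ∈ ℤ and t ∈ ℂ, and let ξ_1, …, ξ_k ∈ ℂ be pairwise distinct and satisfy: ξ_i ≠ 0, ξ_i ≠ 1, qξ_i ≠ p, and p + qξ_iξ_j - ξ_i ≠ 0 for all i, j. Define ε(ξ) = pξ^{-1} + qξ - 1, U(ζ,ζ') = (p + qζζ' - ζ)/(ζ' - ζ), and K_x(ξ,ξ') = ξ^x e^{ε(ξ)t}/(p + qξξ' - ξ). Then det( K_x(ξ_i,ξ_j) )_{i,j=1}^{k} = (-1)^k (pq)^{k(k-1)/2} ∏_{i≠j} U(ξ_i,ξ_j)^{-1} · ∏_{i=1}^{k} ((1-ξ_i)(qξ_i - p))^{-1} · ∏_{i=1}^{k} ξ_i^x e^{ε(ξ_i)t}. -/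
open Finset

private lemma ite_mul_one' {c : Prop} [Decidable c] (a b : ℂ) :
    (if c then a * b else 1) = (if c then a else 1) * (if c then b else 1) := by
  split <;> simp

private lemma ite_inv' {c : Prop} [Decidable c] (a : ℂ) :
    (if c then a⁻¹ else 1) = (if c then a else 1)⁻¹ := by
  split <;> simp

private lemma prod_ne_split {k : ℕ} (h : Fin k → Fin k → ℂ) :
    (∏ i, ∏ j, if i ≠ j then h i j else 1) =
      (∏ i, ∏ j, if i < j then h i j else 1) *
        (∏ i, ∏ j, if i < j then h j i else 1) := by
  have key : ∀ i j : Fin k, (if i ≠ j then h i j else 1) =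
      (if i < j then h i j else 1) * (if j < i then h i j else 1) := by
    intro i j
    rcases lt_trichotomy i j with hij | hij | hij
    · simp [hij, hij.ne, hij.not_gt]
    · simp [hij]
    · simp [hij, hij.ne', hij.not_gt]
  simp_rw [key, Finset.prod_mul_distrib]
  congr 1
  exact Finset.prod_comm
private lemma prod_ite_const {k : ℕ} (c : ℂ) :
    (∏ i : Fin k, ∏ j : Fin k, if i < j then c else 1) = c ^ (k * (k - 1) / 2) := by
  induction k with
  | zero => simp
  | succ n ih =>
    rw [Fin.prod_univ_castSucc]
    have h1 : (∏ j : Fin (n+1), if Fin.last n < j then c else 1) = 1 :=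
      Finset.prod_eq_one fun j _ => if_neg (Fin.le_last j).not_gt
    have h2 : ∀ i : Fin n, (∏ j : Fin (n+1), if i.castSucc < j then c else 1) =
        (∏ j : Fin n, if i < j then c else 1) * c := by
      intro i
      rw [Fin.prod_univ_castSucc]
      simp [Fin.castSucc_lt_castSucc_iff, Fin.castSucc_lt_last]
    simp_rw [h1, mul_one, h2]
    rw [Finset.prod_mul_distrib, ih, Finset.prod_const, Finset.card_univ, Fintype.card_fin,
      ← pow_add]
    congr 1
    have expand : (n + 1) * n = n * (n - 1) + n * 2 := by
      cases n with
      | zero => rfl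
      | succ l => simp [Nat.succ_sub_one]; ring
    rw [Nat.add_sub_cancel, expand, Nat.add_mul_div_right _ _ (by norm_num : (0:ℕ) < 2)]

private lemma prod_ite_pair {k : ℕ} (g : Fin k → ℂ) :
    (∏ i : Fin k, ∏ j : Fin k, if i < j then g i * g j else 1) =
      ∏ i : Fin k, g i ^ (k - 1) := by
  induction k with
  | zero => simp
  | succ n ih =>
    rw [Fin.prod_univ_castSucc]
    have h1 : (∏ j : Fin (n+1), if Fin.last n < j then g (Fin.last n) * g j else 1) = 1 :=
      Finset.prod_eq_one fun j _ => if_neg (Fin.le_last j).not_gt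
    have h2 : ∀ i : Fin n, (∏ j : Fin (n+1),
        if i.castSucc < j then g i.castSucc * g j else 1) =
        (∏ j : Fin n, if i < j then g i.castSucc * g j.castSucc else 1) *
          (g i.castSucc * g (Fin.last n)) := by
      intro i
      rw [Fin.prod_univ_castSucc]
      simp [Fin.castSucc_lt_castSucc_iff, Fin.castSucc_lt_last]
    simp_rw [h1, mul_one, h2]
    rw [Finset.prod_mul_distrib, ih (fun i => g i.castSucc), Finset.prod_mul_distrib,
      Finset.prod_const, Finset.card_univ, Fintype.card_fin]
    rw [Fin.prod_univ_castSucc (f := fun i => g i ^ (n + 1 - 1))]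
    simp only [Nat.add_sub_cancel]
    cases n with
    | zero => simp
    | succ m =>
      have : ∀ i : Fin (m+1), g i.castSucc ^ (m + 1 - 1) * g i.castSucc =
          g i.castSucc ^ (m + 1) := by
        intro i
        rw [Nat.add_sub_cancel, ← pow_succ]
      have h3 : (∏ i : Fin (m+1), g i.castSucc ^ (m + 1 - 1)) *
          (∏ x : Fin (m+1), g x.castSucc) = ∏ x : Fin (m+1), g x.castSucc ^ (m + 1) := by
        rw [← Finset.prod_mul_distrib]
        exact Finset.prod_congr rfl fun i _ => this i
      rw [← mul_assoc, h3]

private lemma prod_diag_split {k : ℕ} (f : Fin k → Fin k → ℂ) :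
    (∏ i, ∏ j, f i j) =
      (∏ i, ∏ j, if i ≠ j then f i j else 1) * ∏ i, f i i := by
  have key : ∀ i j : Fin k, f i j =
      (if i ≠ j then f i j else 1) * (if i = j then f i j else 1) := by
    intro i j
    by_cases hij : i = j <;> simp [hij]
  rw [show (∏ i, ∏ j, f i j) =
      ∏ i, ∏ j, ((if i ≠ j then f i j else 1) * (if i = j then f i j else 1)) from
    Finset.prod_congr rfl fun i _ => Finset.prod_congr rfl fun j _ => key i j]
  simp_rw [Finset.prod_mul_distrib]
  congr 1
  apply Finset.prod_congr rfl
  intro i _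
  simp

private 
lemma cauchy_det : ∀ (n : ℕ) (a b : Fin n → ℂ), (∀ i j, a i + b j ≠ 0) →
    Matrix.det (Matrix.of fun i j => (a i + b j)⁻¹) =
      (∏ i, ∏ j, if i < j then (a j - a i) * (b j - b i) else 1) /
        ∏ i, ∏ j, (a i + b j) := by
  intro n
  induction n with
  | zero => intro a b _; simp [Matrix.det_fin_zero]
  | succ n ih =>
    intro a b hab
    set L : Fin (n+1) := Fin.last n with hL
    set u : Fin (n+1) → ℂ := fun i => if i = L then 1 else (a L - a i) with hu
    set w : Fin (n+1) → ℂ := fun j => (a L + b j)⁻¹ with hw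
    set D : Matrix (Fin (n+1)) (Fin (n+1)) ℂ :=
      Matrix.of (fun i j => if i = L then 1 else (a i + b j)⁻¹) with hD
    have hrow : Matrix.det (Matrix.of fun i j : Fin (n+1) => (a i + b j)⁻¹) =
        Matrix.det (Matrix.of fun i j : Fin (n+1) => u i * (w j * D i j)) := by
      apply Matrix.det_eq_of_forall_row_eq_smul_add_const
        (fun i => if i = L then 0 else 1) L (by simp)
      intro i j
      simp only [Matrix.of_apply, hu, hw, hD]
      by_cases hi : i = L
      · simp [hi]
      · simp only [hi, if_neg hi, if_pos rfl, ite_false, ite_true]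
        have h1 := hab i j
        have h2 := hab L j
        field_simp
        ring
    have hfac : Matrix.det (Matrix.of fun i j : Fin (n+1) => u i * (w j * D i j)) =
        (∏ i, u i) * ((∏ j, w j) * Matrix.det D) := by
      exact (Matrix.det_mul_column u (Matrix.of fun i j => w j * D i j)).trans
        (by rw [Matrix.det_mul_row w D])
    set u' : Fin (n+1) → ℂ := fun i => if i = L then 1 else (a i + b L)⁻¹ with hu'
    set w' : Fin (n+1) → ℂ := fun j => if j = L then 1 else (b L - b j) with hw'
    set E : Matrix (Fin (n+1)) (Fin (n+1)) ℂ :=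
      Matrix.of (fun i j => if i = L then (if j = L then 1 else 0)
        else if j = L then 1 else (a i + b j)⁻¹) with hE
    have hcol : Matrix.det D =
        Matrix.det (Matrix.of fun i j : Fin (n+1) => w' j * (u' i * E i j)) := by
      rw [← Matrix.det_transpose D,
        ← Matrix.det_transpose (Matrix.of fun i j : Fin (n+1) => w' j * (u' i * E i j))]
      apply Matrix.det_eq_of_forall_row_eq_smul_add_const
        (fun j => if j = L then 0 else 1) L (by simp)
      intro j i
      simp only [Matrix.transpose_apply, Matrix.of_apply, hu', hw', hD, hE]
      by_cases hj : j = L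
      · simp [hj]
      · by_cases hi : i = L
        · simp [hi, hj]
        · simp only [hi, hj, ite_false, ite_true]
          have h1 := hab i j
          have h2 := hab i L
          field_simp
          ring
    have hfac2 : Matrix.det (Matrix.of fun i j : Fin (n+1) => w' j * (u' i * E i j)) =
        (∏ j, w' j) * ((∏ i, u' i) * Matrix.det E) := by
      exact (Matrix.det_mul_row w' (Matrix.of fun i j => u' i * E i j)).trans
        (by rw [Matrix.det_mul_column u' E])
    have hexp : Matrix.det E =
        Matrix.det (Matrix.of fun i j : Fin n =>
          (a (Fin.castSucc i) + b (Fin.castSucc j))⁻¹) := by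
      rw [Matrix.det_succ_row E L]
      rw [Finset.sum_eq_single L]
      · have hEL : E L L = 1 := by simp [hE]
        rw [hEL]
        have : E.submatrix L.succAbove L.succAbove =
            Matrix.of fun i j : Fin n =>
              (a (Fin.castSucc i) + b (Fin.castSucc j))⁻¹ := by
          ext i j
          simp only [Matrix.submatrix_apply, hL, Fin.succAbove_last, hE, Matrix.of_apply]
          rw [if_neg (Fin.castSucc_lt_last i).ne, if_neg (Fin.castSucc_lt_last j).ne]
        rw [this]
        simp [hL, Even.neg_one_pow ⟨n, rfl⟩, pow_add]
      · intro j _ hj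
        have : E L j = 0 := by simp [hE, hj]
        simp [this]
      · simp
    have hih := ih (fun i => a (Fin.castSucc i)) (fun j => b (Fin.castSucc j))
      (fun i j => hab _ _)
    rw [hrow, hfac, hcol, hfac2, hexp, hih]
    -- now pure product bookkeeping
    have hcsne : ∀ i : Fin n, Fin.castSucc i ≠ L := fun i => (Fin.castSucc_lt_last i).ne
    have hpu : ∏ i, u i = ∏ i : Fin n, (a L - a (Fin.castSucc i)) := by
      rw [Fin.prod_univ_castSucc]
      simp [hu, hcsne, hL]
    have hpu' : ∏ i, u' i = (∏ i : Fin n, (a (Fin.castSucc i) + b L))⁻¹ := by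
      rw [Fin.prod_univ_castSucc, ← Finset.prod_inv_distrib]
      simp [hu', hcsne, hL]
    have hpw' : ∏ j, w' j = ∏ j : Fin n, (b L - b (Fin.castSucc j)) := by
      rw [Fin.prod_univ_castSucc]
      simp [hw', hcsne, hL]
    have hpw : ∏ j, w j = (∏ j : Fin (n+1), (a L + b j))⁻¹ := by
      rw [hw, ← Finset.prod_inv_distrib]
    have hN : (∏ i : Fin (n+1), ∏ j, if i < j then (a j - a i) * (b j - b i) else 1) =
        (∏ i : Fin n, ∏ j : Fin n, if i < j then
          (a (Fin.castSucc j) - a (Fin.castSucc i)) *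
            (b (Fin.castSucc j) - b (Fin.castSucc i)) else 1) *
          ((∏ i : Fin n, (a L - a (Fin.castSucc i))) *
            ∏ i : Fin n, (b L - b (Fin.castSucc i))) := by
      rw [Fin.prod_univ_castSucc (n := n)]
      have hlast : (∏ j : Fin (n+1), if L < j then (a j - a L) * (b j - b L) else 1) = 1 := by
        apply Finset.prod_eq_one
        intro j _
        rw [if_neg (by simp [hL, (Fin.le_last j).not_gt])]
      rw [hlast, mul_one, ← Finset.prod_mul_distrib, ← Finset.prod_mul_distrib]
      apply Finset.prod_congr rfl
      intro i _
      rw [Fin.prod_univ_castSucc (n := n)]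
      simp [Fin.castSucc_lt_castSucc_iff, Fin.castSucc_lt_last, hL]
    have hD2 : (∏ i : Fin (n+1), ∏ j, (a i + b j)) =
        ((∏ i : Fin n, ∏ j : Fin n, (a (Fin.castSucc i) + b (Fin.castSucc j))) *
          ∏ i : Fin n, (a (Fin.castSucc i) + b L)) *
          ∏ j : Fin (n+1), (a L + b j) := by
      rw [Fin.prod_univ_castSucc (n := n), ← Finset.prod_mul_distrib]
      congr 1
      apply Finset.prod_congr rfl
      intro i _
      rw [Fin.prod_univ_castSucc (n := n)]
    rw [hpu, hpu', hpw, hpw', hN, hD2]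
    have hZ : (∏ j : Fin (n+1), (a L + b j)) ≠ 0 :=
      Finset.prod_ne_zero_iff.2 fun j _ => hab L j
    have hT : (∏ i : Fin n, (a (Fin.castSucc i) + b L)) ≠ 0 :=
      Finset.prod_ne_zero_iff.2 fun i _ => hab _ _
    have hDn : (∏ i : Fin n, ∏ j : Fin n, (a (Fin.castSucc i) + b (Fin.castSucc j))) ≠ 0 :=
      Finset.prod_ne_zero_iff.2 fun i _ => Finset.prod_ne_zero_iff.2 fun j _ => hab _ _
    field_simp

private lemma final_scalar (F W S Pg Dg p q : ℂ) (m c : ℕ) (hq : q ≠ 0) (hS : S ≠ 0)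
    (hPg : Pg ≠ 0) (hDg : Dg ≠ 0) :
    F * (q ^ (m + 1) * Dg)⁻¹ *
      ((-p * q⁻¹) ^ c * ((Dg ^ m)⁻¹ * (W * W)) /
        ((q ^ (m + 1) * (q ^ c * q ^ c) * (Dg ^ m * Dg))⁻¹ *
          (S * ((-1) ^ (m + 1) * Pg)))) =
    (-1) ^ (m + 1) * (p * q) ^ c * ((-1) ^ c * (W * W) * S⁻¹) * Pg⁻¹ * F := by
  have hneg : ((-1 : ℂ)) ^ (m + 1) ≠ 0 := pow_ne_zero _ (by norm_num)
  field_simp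
  have hsq : ((-1 : ℂ) ^ (m + 1)) ^ 2 = 1 := by
    rw [← pow_mul]; exact Even.neg_one_pow ⟨m + 1, by ring⟩
  rw [hsq, neg_eq_neg_one_mul, mul_pow, div_pow, mul_pow]
  field_simp


set_option maxHeartbeats 1000000 in
/-- Determinant identity for the ASEP kernel `K_x(ξ,ξ') = ξ^x e^{ε(ξ)t}/(p + qξξ' - ξ)`,
where `ε(ξ) = pξ⁻¹ + qξ - 1` and `U(ζ,ζ') = (p + qζζ' - ζ)/(ζ' - ζ)`:
`det(K_x(ξ_i,ξ_j)) = (-1)^k (pq)^{k(k-1)/2} ∏_{i≠j} U(ξ_i,ξ_j)⁻¹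
· ∏_i ((1-ξ_i)(qξ_i-p))⁻¹ · ∏_i ξ_i^x e^{ε(ξ_i)t}`. -/
theorem det_Kx_kernel (k : ℕ) (hk : 1 ≤ k) (p q : ℂ) (hpq : p + q = 1)
    (x : ℤ) (t : ℂ) (ξ : Fin k → ℂ) (hdist : Function.Injective ξ)
    (h0 : ∀ i, ξ i ≠ 0) (h1 : ∀ i, ξ i ≠ 1) (h2 : ∀ i, q * ξ i ≠ p)
    (h3 : ∀ i j, p + q * ξ i * ξ j - ξ i ≠ 0) :
    Matrix.det (Matrix.of fun i j : Fin k =>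
        ξ i ^ x * Complex.exp ((p * (ξ i)⁻¹ + q * ξ i - 1) * t) /
          (p + q * ξ i * ξ j - ξ i)) =
      (-1) ^ k * (p * q) ^ (k * (k - 1) / 2) *
        (∏ i : Fin k, ∏ j : Fin k,
          if i ≠ j then ((p + q * ξ i * ξ j - ξ i) / (ξ j - ξ i))⁻¹ else 1) *
        (∏ i : Fin k, ((1 - ξ i) * (q * ξ i - p))⁻¹) *
        ∏ i : Fin k, ξ i ^ x * Complex.exp ((p * (ξ i)⁻¹ + q * ξ i - 1) * t) := by
  by_cases hk1 : k = 1
  · subst hk1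
    have hA0 : (1 - ξ 0) * (q * ξ 0 - p) ≠ 0 :=
      mul_ne_zero (sub_ne_zero.2 (Ne.symm (h1 0))) (sub_ne_zero.2 (h2 0))
    rw [Matrix.det_fin_one]
    simp only [Matrix.of_apply, Fin.prod_univ_one]
    rw [if_neg (fun h => h rfl)]
    rw [show p + q * ξ 0 * ξ 0 - ξ 0 = -1 * ((1 - ξ 0) * (q * ξ 0 - p)) by
      linear_combination (ξ 0) * hpq]
    rw [neg_one_mul, div_neg, div_eq_mul_inv]
    ring
  have hk2 : 2 ≤ k := by omega
  have hC : k * (k - 1) / 2 ≠ 0 := by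
    have h21 : 2 * 1 ≤ k * (k - 1) := Nat.mul_le_mul hk2 (by omega)
    omega
  have hi01 : (⟨0, by omega⟩ : Fin k) ≠ (⟨1, by omega⟩ : Fin k) :=
    Fin.ne_of_val_ne (by norm_num)
  by_cases hq : q = 0
  · rw [show (p * q) ^ (k * (k - 1) / 2) = 0 by rw [hq, mul_zero, zero_pow hC],
      mul_zero, zero_mul, zero_mul, zero_mul]
    apply Matrix.det_zero_of_column_eq hi01
    intro r
    simp only [Matrix.of_apply]
    rw [hq]
    ring_nf
  by_cases hp : p = 0
  · rw [show (p * q) ^ (k * (k - 1) / 2) = 0 by rw [hp, zero_mul, zero_pow hC],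
      mul_zero, zero_mul, zero_mul, zero_mul]
    have hmat0 : (Matrix.of fun i j : Fin k =>
        ξ i ^ x * Complex.exp ((p * (ξ i)⁻¹ + q * ξ i - 1) * t) /
          (p + q * ξ i * ξ j - ξ i)) =
        Matrix.of fun i j : Fin k =>
          (ξ i ^ x * Complex.exp ((p * (ξ i)⁻¹ + q * ξ i - 1) * t) * (ξ i)⁻¹) *
            (Matrix.of (fun (_ j : Fin k) => (q * ξ j - 1)⁻¹) i j) := by
      ext i j
      simp only [Matrix.of_apply]
      rw [show p + q * ξ i * ξ j - ξ i = ξ i * (q * ξ j - 1) by rw [hp]; ring,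
        div_eq_mul_inv, mul_inv]
      ring
    rw [hmat0, Matrix.det_mul_column]
    rw [Matrix.det_zero_of_row_eq hi01 (by funext j; simp), mul_zero]
  -- main case
  set f : Fin k → ℂ := fun i => ξ i ^ x * Complex.exp ((p * (ξ i)⁻¹ + q * ξ i - 1) * t)
    with hf
  set a : Fin k → ℂ := fun i => (p - ξ i) / (q * ξ i) with ha
  have hqξ : ∀ i, q * ξ i ≠ 0 := fun i => mul_ne_zero hq (h0 i)
  have habval : ∀ i j, a i + ξ j = (p + q * ξ i * ξ j - ξ i) / (q * ξ i) := by
    intro i j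
    rw [ha]
    rw [eq_div_iff (hqξ i), add_mul, div_mul_cancel₀ _ (hqξ i)]
    ring
  have hab : ∀ i j, a i + ξ j ≠ 0 := fun i j =>
    (habval i j) ▸ div_ne_zero (h3 i j) (hqξ i)
  have hmat : (Matrix.of fun i j : Fin k => f i / (p + q * ξ i * ξ j - ξ i)) =
      Matrix.of fun i j => (f i * (q * ξ i)⁻¹) *
        (Matrix.of (fun i j => (a i + ξ j)⁻¹) i j) := by
    ext i j
    simp only [Matrix.of_apply]
    rw [habval i j, inv_div]
    have hh : (q * ξ i)⁻¹ * (q * ξ i / (p + q * ξ i * ξ j - ξ i)) =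
        (p + q * ξ i * ξ j - ξ i)⁻¹ := by
      rw [div_eq_mul_inv, ← mul_assoc, inv_mul_cancel₀ (hqξ i), one_mul]
    rw [mul_assoc (f i), hh, div_eq_mul_inv]
  rw [hmat, Matrix.det_mul_column, cauchy_det k a ξ hab]
  obtain ⟨m, rfl⟩ : ∃ m, k = m + 1 := ⟨k - 1, by omega⟩
  simp only [Nat.add_sub_cancel]
  have hcc : (m+1) * m / 2 + (m+1) * m / 2 = (m+1) * m := by
    have h2d : 2 ∣ (m+1) * m := by
      rw [Nat.mul_comm]
      exact (Nat.even_mul_succ_self m).two_dvd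
    omega
  have hprodq : (∏ i : Fin (m+1), (q * ξ i)) = q ^ (m+1) * ∏ i : Fin (m+1), ξ i := by
    rw [Finset.prod_mul_distrib, Finset.prod_const, Finset.card_univ, Fintype.card_fin]
  have hA : (∏ i : Fin (m+1), (f i * (q * ξ i)⁻¹)) =
      (∏ i : Fin (m+1), f i) * (q ^ (m+1) * ∏ i : Fin (m+1), ξ i)⁻¹ := by
    rw [Finset.prod_mul_distrib, Finset.prod_inv_distrib, hprodq]
  have keyB : ∀ i j : Fin (m+1), (if i < j then (a j - a i) * (ξ j - ξ i) else 1) =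
      (if i < j then (-p) * q⁻¹ else 1) *
        ((if i < j then ξ i * ξ j else 1)⁻¹ *
          ((if i < j then ξ j - ξ i else 1) * (if i < j then ξ j - ξ i else 1))) := by
    intro i j
    by_cases hij : i < j
    · simp only [if_pos hij]
      rw [ha]
      field_simp [h0 i, h0 j]
      ring
    · simp [hij]
  have hB : (∏ i : Fin (m+1), ∏ j, if i < j then (a j - a i) * (ξ j - ξ i) else 1) =
      ((-p) * q⁻¹) ^ ((m+1) * m / 2) *
        ((((∏ i : Fin (m+1), ξ i) ^ m)⁻¹ *
          ((∏ i : Fin (m+1), ∏ j, if i < j then ξ j - ξ i else 1) *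
            (∏ i : Fin (m+1), ∏ j, if i < j then ξ j - ξ i else 1)))) := by
    rw [Finset.prod_congr rfl fun i _ => Finset.prod_congr rfl fun j _ => keyB i j]
    simp only [Finset.prod_mul_distrib, Finset.prod_inv_distrib]
    rw [prod_ite_const, prod_ite_pair, Finset.prod_pow]
    simp only [Nat.add_sub_cancel]
  have keyD : ∀ i j : Fin (m+1), a i + ξ j = (q * ξ i)⁻¹ * (p + q * ξ i * ξ j - ξ i) := by
    intro i j
    rw [habval i j, div_eq_mul_inv, mul_comm]
  have keydiag : ∀ i : Fin (m+1), p + q * ξ i * ξ i - ξ i =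
      -1 * ((1 - ξ i) * (q * ξ i - p)) := by
    intro i
    linear_combination (ξ i) * hpq
  have hdiagprod : (∏ i : Fin (m+1), (p + q * ξ i * ξ i - ξ i)) =
      (-1) ^ (m+1) * ∏ i : Fin (m+1), ((1 - ξ i) * (q * ξ i - p)) := by
    rw [Finset.prod_congr rfl fun i _ => keydiag i, Finset.prod_mul_distrib,
      Finset.prod_const, Finset.card_univ, Fintype.card_fin]
  have hqpow : (∏ i : Fin (m+1), ((q * ξ i)⁻¹) ^ (m+1)) =
      ((q ^ (m+1) * ∏ i : Fin (m+1), ξ i) ^ (m+1))⁻¹ := by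
    rw [← hprodq, ← Finset.prod_pow, ← Finset.prod_inv_distrib]
    exact Finset.prod_congr rfl fun i _ => inv_pow _ _
  have step1 : (∏ i : Fin (m+1), ∏ j, (a i + ξ j)) =
      (∏ i : Fin (m+1), ((q * ξ i)⁻¹) ^ (m+1)) *
        ∏ i : Fin (m+1), ∏ j, (p + q * ξ i * ξ j - ξ i) := by
    rw [Finset.prod_congr rfl fun i _ => Finset.prod_congr rfl fun j _ => keyD i j]
    simp only [Finset.prod_mul_distrib, Finset.prod_const, Finset.card_univ,
      Fintype.card_fin]
  have hDd : (∏ i : Fin (m+1), ∏ j, (a i + ξ j)) =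
      ((q ^ (m+1) * ∏ i : Fin (m+1), ξ i) ^ (m+1))⁻¹ *
        (((∏ i : Fin (m+1), ∏ j, if i ≠ j then p + q * ξ i * ξ j - ξ i else 1)) *
          ((-1) ^ (m+1) * ∏ i : Fin (m+1), ((1 - ξ i) * (q * ξ i - p)))) := by
    rw [step1, hqpow, prod_diag_split (fun i j => p + q * ξ i * ξ j - ξ i), hdiagprod]
  have keyU : ∀ i j : Fin (m+1),
      (if i ≠ j then ((p + q * ξ i * ξ j - ξ i) / (ξ j - ξ i))⁻¹ else 1) =
        (if i ≠ j then ξ j - ξ i else 1) *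
          (if i ≠ j then p + q * ξ i * ξ j - ξ i else 1)⁻¹ := by
    intro i j
    by_cases hij : i ≠ j
    · simp only [if_pos hij]
      rw [inv_div, div_eq_mul_inv]
    · simp [hij]
  have hU : (∏ i : Fin (m+1), ∏ j,
      if i ≠ j then ((p + q * ξ i * ξ j - ξ i) / (ξ j - ξ i))⁻¹ else 1) =
      (∏ i : Fin (m+1), ∏ j, if i ≠ j then ξ j - ξ i else 1) *
        (∏ i : Fin (m+1), ∏ j, if i ≠ j then p + q * ξ i * ξ j - ξ i else 1)⁻¹ := by
    rw [Finset.prod_congr rfl fun i _ => Finset.prod_congr rfl fun j _ => keyU i j]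
    simp only [Finset.prod_mul_distrib, Finset.prod_inv_distrib]
  have keyV : ∀ i j : Fin (m+1), (if i < j then ξ i - ξ j else 1) =
      (if i < j then (-1 : ℂ) else 1) * (if i < j then ξ j - ξ i else 1) := by
    intro i j
    by_cases hij : i < j
    · simp only [if_pos hij]; ring
    · simp [hij]
  have hV : (∏ i : Fin (m+1), ∏ j, if i ≠ j then ξ j - ξ i else 1) =
      (-1 : ℂ) ^ ((m+1) * m / 2) *
        ((∏ i : Fin (m+1), ∏ j, if i < j then ξ j - ξ i else 1) *
          (∏ i : Fin (m+1), ∏ j, if i < j then ξ j - ξ i else 1)) := by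
    rw [prod_ne_split]
    rw [Finset.prod_congr rfl fun i _ => Finset.prod_congr rfl fun j _ => keyV i j]
    simp only [Finset.prod_mul_distrib]
    rw [prod_ite_const]
    simp only [Nat.add_sub_cancel]
    ring
  have hPinv : (∏ i : Fin (m+1), ((1 - ξ i) * (q * ξ i - p))⁻¹) =
      (∏ i : Fin (m+1), ((1 - ξ i) * (q * ξ i - p)))⁻¹ := Finset.prod_inv_distrib _
  rw [hA, hB, hDd, hU, hV, hPinv]
  have hDg : (∏ i : Fin (m+1), ξ i) ≠ 0 := Finset.prod_ne_zero_iff.2 fun i _ => h0 i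
  have hS : (∏ i : Fin (m+1), ∏ j, if i ≠ j then p + q * ξ i * ξ j - ξ i else 1) ≠ 0 :=
    Finset.prod_ne_zero_iff.2 fun i _ => Finset.prod_ne_zero_iff.2 fun j _ => by
      by_cases hij : i ≠ j
      · rw [if_pos hij]; exact h3 i j
      · rw [if_neg hij]; exact one_ne_zero
  have hPg : (∏ i : Fin (m+1), ((1 - ξ i) * (q * ξ i - p))) ≠ 0 :=
    Finset.prod_ne_zero_iff.2 fun i _ =>
      mul_ne_zero (sub_ne_zero.2 (Ne.symm (h1 i))) (sub_ne_zero.2 (h2 i))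
  have hexpand : (q ^ (m+1) * ∏ i : Fin (m+1), ξ i) ^ (m+1) =
      (q ^ (m+1) * (q ^ ((m+1) * m / 2) * q ^ ((m+1) * m / 2))) *
        ((∏ i : Fin (m+1), ξ i) ^ m * ∏ i : Fin (m+1), ξ i) := by
    rw [mul_pow, ← pow_mul, ← pow_add, ← pow_add, ← pow_succ]
    congr 2
    rw [hcc]
    ring
  rw [hexpand]
  set F := ∏ i : Fin (m+1), f i with hF
  set W := ∏ i : Fin (m+1), ∏ j, if i < j then ξ j - ξ i else 1 with hWd
  set S := ∏ i : Fin (m+1), ∏ j, if i ≠ j then p + q * ξ i * ξ j - ξ i else 1 with hSd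
  set Pg := ∏ i : Fin (m+1), ((1 - ξ i) * (q * ξ i - p)) with hPgd
  set Dg := ∏ i : Fin (m+1), ξ i with hDgd
  exact final_scalar F W S Pg Dg p q m ((m+1) * m / 2) hq hS hPg hDg
end

section
/- For every real c > 0 and every real s, (1/2π) ∫_{-∞}^{∞} exp( (c+iy)²/2 - s(c+iy) ) / (c+iy) dy = 1 - G(s). Equivalently, the contour integral (1/2πi) ∫ e^{η²/2 - sη} dη/η along the vertical line Re η = c > 0, taken upward, equals 1 - G(s). -/
open MeasureTheory Set Complex Filter

noncomputable section

lemma cexp_line_integral {w : ℂ} (hw : 0 < w.re) :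
    ∫ t in Ioi (0:ℝ), Complex.exp (-(t:ℂ) * w) = 1 / w := by
  have hw0 : w ≠ 0 := fun h => by simp [h] at hw
  have hderiv : ∀ x ∈ Ici (0:ℝ), HasDerivAt (fun t : ℝ => -Complex.exp (-(t:ℂ) * w) / w)
      (Complex.exp (-(x:ℂ) * w)) x := by
    intro x _
    have h1 : HasDerivAt (fun t : ℂ => Complex.exp (-t * w)) (-w * Complex.exp (-(x:ℂ) * w)) x := by
      have := (Complex.hasDerivAt_exp (-(x:ℂ) * w)).comp (x:ℂ)
        (((hasDerivAt_id (x:ℂ)).neg.mul_const w))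
      simpa [mul_comm, Function.comp_def] using this
    have h2 := (h1.comp_ofReal.div_const w).neg
    convert h2 using 1
    · rfl
    · funext t; rw [neg_div]; rfl
    · field_simp
  have hint : IntegrableOn (fun t : ℝ => Complex.exp (-(t:ℂ) * w)) (Ioi 0) := by
    apply (integrable_norm_iff ?_).mp
    · have : ∀ t : ℝ, ‖Complex.exp (-(t:ℂ) * w)‖ = Real.exp (-w.re * t) := by
        intro t
        rw [Complex.norm_exp]
        congr 1
        simp [mul_comm]
      simp_rw [this]
      exact exp_neg_integrableOn_Ioi 0 hw
    · exact (Complex.continuous_exp.comp (by continuity)).aestronglyMeasurable.restrict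
  have htend : Tendsto (fun t : ℝ => -Complex.exp (-(t:ℂ) * w) / w) atTop (nhds 0) := by
    rw [show (0:ℂ) = -0 / w by simp]
    apply Tendsto.div_const
    apply Tendsto.neg
    rw [show nhds (0:ℂ) = nhds 0 from rfl]
    have : Tendsto (fun t : ℝ => ‖Complex.exp (-(t:ℂ) * w)‖) atTop (nhds 0) := by
      have : ∀ t : ℝ, ‖Complex.exp (-(t:ℂ) * w)‖ = Real.exp (-w.re * t) := by
        intro t
        rw [Complex.norm_exp]
        congr 1
        simp [mul_comm]
      simp_rw [this]
      exact Real.tendsto_exp_atBot.comp (tendsto_id.const_mul_atTop_of_neg (neg_lt_zero.mpr hw))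
    exact squeeze_zero_norm (fun t => le_refl _) this
  have := MeasureTheory.integral_Ioi_of_hasDerivAt_of_tendsto' hderiv hint htend
  rw [this]
  simp [neg_div]

/-- For all real `c > 0` and real `s`,
`(1/2π) ∫_{-∞}^{∞} exp((c+iy)²/2 - s(c+iy))/(c+iy) dy = 1 - G(s)`, where
`G(s) = (1/√(2π)) ∫_{-∞}^{s} e^{-z²/2} dz` is the standard normal distribution
function; i.e. the contour integral `(1/2πi) ∫ e^{η²/2 - sη} dη/η` along the vertical
line `Re η = c > 0`, taken upward, equals `1 - G(s)`. -/
theorem gaussian_vertical_line_integral_pole (c s : ℝ) (hc : 0 < c) :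
    (1 / (2 * Real.pi) : ℂ) *
        ∫ y : ℝ, Complex.exp ((c + y * Complex.I) ^ 2 / 2 - s * (c + y * Complex.I)) /
          (c + y * Complex.I) =
      1 - (((Real.sqrt (2 * Real.pi))⁻¹ * ∫ z in Set.Iic s, Real.exp (-z ^ 2 / 2) : ℝ) : ℂ) := by
  have h2pi : (0:ℝ) < 2 * Real.pi := by positivity
  have hsq : Real.sqrt (2 * Real.pi) ^ 2 = 2 * Real.pi := Real.sq_sqrt h2pi.le
  have hsqpos : 0 < Real.sqrt (2 * Real.pi) := Real.sqrt_pos.mpr h2pi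
  -- Step 1: 1/(c+yI) as a Laplace integral
  have key : ∀ y : ℝ,
      Complex.exp (((c:ℂ) + y * Complex.I) ^ 2 / 2 - s * ((c:ℂ) + y * Complex.I)) /
          ((c:ℂ) + y * Complex.I) =
      ∫ t in Ioi (0:ℝ),
        Complex.exp (((c:ℂ) + y * Complex.I) ^ 2 / 2 - ((s:ℂ) + t) * ((c:ℂ) + y * Complex.I)) := by
    intro y
    have hre : 0 < ((c:ℂ) + y * Complex.I).re := by simp [hc]
    rw [div_eq_mul_one_div, ← cexp_line_integral hre, ← integral_const_mul]
    refine setIntegral_congr_fun measurableSet_Ioi fun t _ => ?_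
    rw [← Complex.exp_add]
    congr 1
    ring
  simp_rw [key]
  -- Step 2: Fubini
  have hF : Integrable (fun p : ℝ × ℝ =>
      Complex.exp (((c:ℂ) + p.1 * Complex.I) ^ 2 / 2 - ((s:ℂ) + p.2) * ((c:ℂ) + p.1 * Complex.I)))
      (volume.prod (volume.restrict (Ioi 0))) := by
    have h1 : Integrable (fun y : ℝ => Real.exp ((c^2 - y^2)/2 - s*c)) volume := by
      have : ∀ y : ℝ, Real.exp ((c^2 - y^2)/2 - s*c)
          = Real.exp (c^2/2 - s*c) * Real.exp (-(1/2) * y^2) := by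
        intro y; rw [← Real.exp_add]; ring_nf
      simp_rw [this]
      exact (integrable_exp_neg_mul_sq (by norm_num : (0:ℝ) < 1/2)).const_mul _
    have h2 : Integrable (fun t : ℝ => Real.exp (-c * t)) (volume.restrict (Ioi 0)) :=
      exp_neg_integrableOn_Ioi 0 hc
    have hnorm : ∀ p : ℝ × ℝ,
        ‖Complex.exp (((c:ℂ) + p.1 * Complex.I) ^ 2 / 2 -
          ((s:ℂ) + p.2) * ((c:ℂ) + p.1 * Complex.I))‖
        = Real.exp ((c^2 - p.1^2)/2 - s*c) * Real.exp (-c * p.2) := by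
      rintro ⟨y, t⟩
      rw [Complex.norm_exp, ← Real.exp_add]
      congr 1
      simp [Complex.add_re, Complex.mul_re, Complex.div_re, Complex.normSq, pow_two]
      ring
    refine Integrable.mono' (h1.mul_prod h2) ?_ (ae_of_all _ fun p => le_of_eq (hnorm p))
    refine (Continuous.aestronglyMeasurable ?_)
    fun_prop
  rw [integral_integral_swap hF]
  -- Step 3: inner Gaussian integral
  have inner : ∀ t : ℝ,
      (∫ y : ℝ, Complex.exp (((c:ℂ) + y * Complex.I) ^ 2 / 2 -
        ((s:ℂ) + t) * ((c:ℂ) + y * Complex.I)))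
      = (Real.sqrt (2 * Real.pi) : ℂ) * Complex.exp (-((s:ℂ) + t)^2 / 2) := by
    intro t
    have hb : (-(1/2) : ℂ).re < 0 := by norm_num
    have hrw : ∀ y : ℝ,
        Complex.exp (((c:ℂ) + y * Complex.I) ^ 2 / 2 - ((s:ℂ) + t) * ((c:ℂ) + y * Complex.I))
        = Complex.exp ((-(1/2)) * (y:ℂ)^2 + (((c:ℂ) - ((s:ℂ) + t)) * Complex.I) * y +
            ((c:ℂ)^2/2 - ((s:ℂ) + t) * c)) := by
      intro y
      congr 1
      linear_combination ((y:ℂ)^2/2) * Complex.I_sq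
    simp_rw [hrw]
    rw [integral_cexp_quadratic hb]
    congr 1
    · rw [show ((Real.pi:ℂ) / -(-(1/2))) = (((2 * Real.pi : ℝ)):ℂ) by push_cast; ring,
        show ((1:ℂ)/2) = ((1/2 : ℝ) : ℂ) by norm_num, ← Complex.ofReal_cpow h2pi.le,
        Real.sqrt_eq_rpow]
    · congr 1
      linear_combination (((c:ℂ) - ((s:ℂ)+t))^2/2) * Complex.I_sq
  simp_rw [inner]
  rw [integral_const_mul]
  -- Step 4: reduce to a real integral
  have hreal : ∀ t : ℝ, Complex.exp (-((s:ℂ) + t)^2 / 2)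
      = ((Real.exp (-(s + t)^2 / 2) : ℝ) : ℂ) := by
    intro t
    rw [Complex.ofReal_exp]
    push_cast
    ring_nf
  simp_rw [hreal]
  have hcast : (∫ t in Ioi (0:ℝ), ((Real.exp (-(s+t)^2/2) : ℝ) : ℂ))
      = ((∫ t in Ioi (0:ℝ), Real.exp (-(s+t)^2/2) : ℝ) : ℂ) := integral_ofReal
  rw [hcast]
  -- Step 5: translation
  have htrans : (∫ t in Ioi (0:ℝ), Real.exp (-(s + t)^2 / 2))
      = ∫ u in Ioi s, Real.exp (-u^2 / 2) := by
    have := (measurePreserving_add_right volume s).setIntegral_preimage_emb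
      (measurableEmbedding_addRight s) (fun u => Real.exp (-u^2 / 2)) (Ioi s)
    rw [show (fun x => x + s) ⁻¹' Ioi s = Ioi 0 by ext x; simp] at this
    rw [← this]
    refine setIntegral_congr_fun measurableSet_Ioi fun t _ => ?_
    ring_nf
  rw [htrans]
  -- Step 6: complement
  have hgint : Integrable (fun u : ℝ => Real.exp (-u^2 / 2)) volume := by
    have : ∀ u : ℝ, Real.exp (-u^2/2) = Real.exp (-(1/2) * u^2) := fun u => by ring_nf
    simp_rw [this]
    exact integrable_exp_neg_mul_sq (by norm_num)
  have hsplit : (∫ z in Iic s, Real.exp (-z^2/2)) + (∫ u in Ioi s, Real.exp (-u^2/2))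
      = Real.sqrt (2 * Real.pi) := by
    rw [intervalIntegral.integral_Iic_add_Ioi hgint.integrableOn hgint.integrableOn]
    have : ∀ u : ℝ, Real.exp (-u^2/2) = Real.exp (-(1/2) * u^2) := fun u => by ring_nf
    simp_rw [this]
    rw [integral_gaussian]
    congr 1
    ring
  have hIoi : (∫ u in Ioi s, Real.exp (-u^2/2))
      = Real.sqrt (2 * Real.pi) - ∫ z in Iic s, Real.exp (-z^2/2) := by
    linarith [hsplit]
  rw [hIoi]
  -- Final arithmetic
  set A : ℝ := ∫ z in Iic s, Real.exp (-z^2/2) with hA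
  have hinv : (Real.sqrt (2*Real.pi))⁻¹ = Real.sqrt (2*Real.pi) / (2*Real.pi) := by
    rw [eq_div_iff (ne_of_gt h2pi), inv_mul_eq_div, div_eq_iff hsqpos.ne', ← pow_two, hsq]
  have hre : (1/(2*Real.pi)) * (Real.sqrt (2*Real.pi) * (Real.sqrt (2*Real.pi) - A))
      = 1 - (Real.sqrt (2*Real.pi))⁻¹ * A := by
    rw [hinv]
    have hpi : Real.pi * Real.pi⁻¹ = 1 := mul_inv_cancel₀ Real.pi_ne_zero
    linear_combination (1/(2*Real.pi)) * hsq + hpi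
  calc (1 / (2 * (Real.pi:ℂ))) * ((Real.sqrt (2*Real.pi) : ℂ) * ((Real.sqrt (2*Real.pi) - A : ℝ) : ℂ))
      = (((1/(2*Real.pi)) * (Real.sqrt (2*Real.pi) * (Real.sqrt (2*Real.pi) - A)) : ℝ) : ℂ) := by
        push_cast; ring
    _ = (((1 - (Real.sqrt (2*Real.pi))⁻¹ * A : ℝ)) : ℂ) := by rw [hre]
    _ = 1 - (((Real.sqrt (2*Real.pi))⁻¹ * A : ℝ) : ℂ) := by push_cast; ring
end
end

section
/- Let N ≥ 1 and k ≥ 1 be integers, let S = {s_1 < s_2 < ⋯ < s_k} be a subset of {1, 2, …, N}, set s_0 = 0 and t_i = s_i - s_{i-1} - 1 for i = 1, …, k, and let ρ, τ ∈ ℂ. Then ∑_{Y : S ⊆ Y ⊆ {1,…,N}} ρ^{|Y|} (1-ρ)^{N-|Y|} τ^{σ(S,Y)} = τ^{k(k+1)/2} ρ^k ∏_{i=1}^{k} (1 - ρ + τ^{k-i+1}ρ)^{t_i}. -/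
private lemma sba_smono_lt (s : ℕ → ℕ) (k : ℕ) (hmono : ∀ i, i < k → s i < s (i + 1)) :
    ∀ a b, a < b → b ≤ k → s a < s b := by
  intro a b
  induction b with
  | zero => intro h _; omega
  | succ n ih =>
    intro hab hbk
    rcases Nat.lt_succ_iff_lt_or_eq.mp hab with h | h
    · exact lt_trans (ih h (by omega)) (hmono n (by omega))
    · subst h; exact hmono a (by omega)

private lemma sba_smono_le (s : ℕ → ℕ) (k : ℕ) (hmono : ∀ i, i < k → s i < s (i + 1)) :
    ∀ a b, a ≤ b → b ≤ k → s a ≤ s b := by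
  intro a b hab hbk
  rcases eq_or_lt_of_le hab with h | h
  · subst h; exact le_rfl
  · exact le_of_lt (sba_smono_lt s k hmono a b h hbk)

private lemma sba_prod_blocks (s : ℕ → ℕ) (k : ℕ)
    (hle : ∀ a b, a ≤ b → b ≤ k → s a ≤ s b) (G : ℕ → ℂ) :
    ∀ n, n ≤ k → ∏ j ∈ Finset.Ioc (s 0) (s n), G j
      = ∏ i ∈ Finset.Icc 1 n, ∏ j ∈ Finset.Ioc (s (i - 1)) (s i), G j := by
  intro n
  induction n with
  | zero => intro _; simp
  | succ n ih =>
    intro h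
    rw [Finset.prod_Icc_succ_top (by omega),
      ← Finset.prod_Ioc_consecutive G (hle 0 n (by omega) (by omega))
        (hle n (n + 1) (by omega) h), ih (by omega)]
    simp

private lemma sba_gauss (k : ℕ) : ∑ i ∈ Finset.Icc 1 k, (k + 1 - i) = k * (k + 1) / 2 := by
  have h1 : ∑ i ∈ Finset.Icc 1 k, (k + 1 - i) = ∑ i ∈ Finset.Icc 1 k, i := by
    apply Finset.sum_nbij' (fun i => k + 1 - i) (fun i => k + 1 - i)
    · intro a ha; simp only [Finset.mem_Icc] at *; omega
    · intro a ha; simp only [Finset.mem_Icc] at *; omega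
    · intro a ha; simp only [Finset.mem_Icc] at *; omega
    · intro a ha; simp only [Finset.mem_Icc] at *; omega
    · intro a ha; rfl
  have h2 : Finset.Icc 1 k = Finset.range (k + 1) \ {0} := by
    ext x; simp [Finset.mem_Icc, Finset.mem_range]; omega
  rw [h1]
  have h2 : Finset.Icc 1 k ∪ {0} = Finset.range (k + 1) := by
    ext x; simp [Finset.mem_Icc, Finset.mem_range]; omega
  have h3 : ∑ i ∈ Finset.Icc 1 k, i = ∑ i ∈ Finset.range (k + 1), i := by
    rw [← h2, Finset.sum_union (by simp)]; simp
  rw [h3, Finset.sum_range_id, Nat.add_sub_cancel, Nat.mul_comm]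

/-- The step-Bernoulli average: for `S = {s_1 < ⋯ < s_k} ⊆ {1,…,N}` (with `s 0 = 0`
and `t_i = s_i - s_{i-1} - 1`), and `σ(S,Y) = #{(u,v) ∈ S × Y : u ≥ v}`,
`∑_{S ⊆ Y ⊆ {1,…,N}} ρ^{|Y|}(1-ρ)^{N-|Y|} τ^{σ(S,Y)}
  = τ^{k(k+1)/2} ρ^k ∏_{i=1}^{k} (1 - ρ + τ^{k-i+1}ρ)^{t_i}`. -/
theorem step_bernoulli_average (N k : ℕ) (hN : 1 ≤ N) (hk : 1 ≤ k)
    (s : ℕ → ℕ) (hs0 : s 0 = 0) (hmono : ∀ i, i < k → s i < s (i + 1))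
    (hrange : ∀ i, 1 ≤ i → i ≤ k → s i ∈ Finset.Icc 1 N)
    (ρ τ : ℂ) :
    ∑ Y ∈ (Finset.Icc 1 N).powerset.filter
        (fun Y => Finset.image s (Finset.Icc 1 k) ⊆ Y),
      ρ ^ Y.card * (1 - ρ) ^ (N - Y.card) *
        τ ^ (((Finset.image s (Finset.Icc 1 k)) ×ˢ Y).filter
          (fun p => p.2 ≤ p.1)).card =
      τ ^ (k * (k + 1) / 2) * ρ ^ k *
        ∏ i ∈ Finset.Icc 1 k, (1 - ρ + τ ^ (k - i + 1) * ρ) ^ (s i - s (i - 1) - 1) := by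
  classical
  have hlt := sba_smono_lt s k hmono
  have hle := sba_smono_le s k hmono
  set S : Finset ℕ := Finset.image s (Finset.Icc 1 k) with hSdef
  have hinj : Set.InjOn s (Finset.Icc 1 k : Finset ℕ) := by
    intro a ha b hb hab
    simp only [Finset.coe_Icc, Set.mem_Icc] at ha hb
    by_contra hne
    rcases Nat.lt_or_ge a b with h | h
    · exact absurd hab (ne_of_lt (hlt a b h hb.2))
    · exact absurd hab.symm (ne_of_lt (hlt b a (by omega) ha.2))
  set w : ℕ → ℕ := fun v => ((Finset.Icc 1 k).filter (fun m => v ≤ s m)).card with hwdef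
  have hSsub : S ⊆ Finset.Icc 1 N := by
    intro x hx
    simp only [hSdef, Finset.mem_image, Finset.mem_Icc] at hx
    obtain ⟨i, hi, rfl⟩ := hx
    exact hrange i hi.1 hi.2
  -- σ(S,Y) = ∑ v in Y, w v
  have hσ : ∀ Y : Finset ℕ,
      ((S ×ˢ Y).filter (fun p => p.2 ≤ p.1)).card = ∑ v ∈ Y, w v := by
    intro Y
    rw [Finset.card_filter, Finset.sum_product, Finset.sum_comm]
    apply Finset.sum_congr rfl
    intro v _
    have : ∑ u ∈ S, (if v ≤ u then 1 else 0) = (S.filter (fun u => v ≤ u)).card := by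
      rw [Finset.card_filter]
    rw [this, hSdef, Finset.filter_image, Finset.card_image_of_injOn
      (hinj.mono (by intro x hx; exact Finset.mem_coe.mpr (Finset.mem_of_mem_filter x hx)))]
  -- w (s i) = k + 1 - i for i ∈ [1,k]
  have hwS : ∀ i, 1 ≤ i → i ≤ k → w (s i) = k + 1 - i := by
    intro i h1 h2
    have : (Finset.Icc 1 k).filter (fun m => s i ≤ s m) = Finset.Icc i k := by
      ext m
      simp only [Finset.mem_filter, Finset.mem_Icc]
      constructor
      · rintro ⟨⟨hm1, hm2⟩, hm3⟩
        refine ⟨?_, hm2⟩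
        by_contra h
        exact absurd hm3 (not_le.mpr (hlt m i (by omega) h2))
      · rintro ⟨hm1, hm2⟩
        exact ⟨⟨by omega, hm2⟩, hle i m hm1 hm2⟩
    rw [hwdef]; simp only []
    rw [this, Nat.card_Icc]
  -- the summand rewrite and reindexing
  set F : ℕ → ℂ := fun j => ρ * τ ^ (w j) + (1 - ρ) with hFdef
  have step1 : ∑ Y ∈ (Finset.Icc 1 N).powerset.filter (fun Y => S ⊆ Y),
      ρ ^ Y.card * (1 - ρ) ^ (N - Y.card) * τ ^ (((S ×ˢ Y).filter (fun p => p.2 ≤ p.1)).card)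
      = (∏ v ∈ S, (ρ * τ ^ (w v))) *
        ∏ j ∈ Finset.Icc 1 N \ S, F j := by
    rw [hFdef, Finset.prod_add, Finset.mul_sum]
    apply Finset.sum_nbij' (fun Y => Y \ S) (fun Z => Z ∪ S)
    · intro Y hY
      simp only [Finset.mem_filter, Finset.mem_powerset] at hY
      simp only [Finset.mem_powerset]
      exact Finset.sdiff_subset_sdiff hY.1 (le_refl _)
    · intro Z hZ
      simp only [Finset.mem_powerset] at hZ
      simp only [Finset.mem_filter, Finset.mem_powerset]
      constructor
      · exact Finset.union_subset (hZ.trans (Finset.sdiff_subset)) hSsub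
      · exact Finset.subset_union_right
    · intro Y hY
      simp only [Finset.mem_filter, Finset.mem_powerset] at hY
      exact Finset.sdiff_union_of_subset hY.2
    · intro Z hZ
      simp only [Finset.mem_powerset] at hZ
      exact Finset.union_sdiff_cancel_right
        (Finset.disjoint_of_subset_left hZ Finset.sdiff_disjoint)
    · intro Y hY
      simp only [Finset.mem_filter, Finset.mem_powerset] at hY
      obtain ⟨hY1, hY2⟩ := hY
      rw [hσ Y]
      have hcard : (Finset.Icc 1 N \ Y).card = N - Y.card := by
        rw [Finset.card_sdiff_of_subset hY1, Nat.card_Icc]; omega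
      have e1 : ρ ^ Y.card = ∏ _v ∈ Y, ρ := by rw [Finset.prod_const]
      have e2 : (1 - ρ) ^ (N - Y.card) = ∏ _j ∈ Finset.Icc 1 N \ Y, (1 - ρ) := by
        rw [Finset.prod_const, hcard]
      have e3 : τ ^ (∑ v ∈ Y, w v) = ∏ v ∈ Y, τ ^ (w v) := by
        rw [Finset.prod_pow_eq_pow_sum]
      have e4 : (∏ _v ∈ Y, ρ) * (∏ v ∈ Y, τ ^ w v) = ∏ v ∈ Y, (ρ * τ ^ w v) := by
        rw [← Finset.prod_mul_distrib]
      have e5 : ∏ v ∈ Y, (ρ * τ ^ w v)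
          = (∏ v ∈ Y \ S, (ρ * τ ^ w v)) * ∏ v ∈ S, (ρ * τ ^ w v) :=
        (Finset.prod_sdiff hY2).symm
      have e6 : Finset.Icc 1 N \ Y = (Finset.Icc 1 N \ S) \ (Y \ S) := by
        ext x
        simp only [Finset.mem_sdiff]
        constructor
        · rintro ⟨h1, h2⟩
          exact ⟨⟨h1, fun hx => h2 (hY2 hx)⟩, fun hx => h2 hx.1⟩
        · rintro ⟨⟨h1, h2⟩, h3⟩
          refine ⟨h1, fun hx => ?_⟩
          by_cases hxS : x ∈ S
          · exact h2 hxS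
          · exact h3 ⟨hx, hxS⟩
      calc ρ ^ Y.card * (1 - ρ) ^ (N - Y.card) * τ ^ (∑ v ∈ Y, w v)
          = (∏ v ∈ Y, (ρ * τ ^ w v)) * ∏ _j ∈ Finset.Icc 1 N \ Y, (1 - ρ) := by
            rw [e1, e2, e3, ← e4]; ring
        _ = ((∏ v ∈ Y \ S, (ρ * τ ^ w v)) * ∏ v ∈ S, (ρ * τ ^ w v)) *
              ∏ _j ∈ (Finset.Icc 1 N \ S) \ (Y \ S), (1 - ρ) := by rw [← e5, ← e6]
        _ = (∏ v ∈ S, (ρ * τ ^ w v)) * ((∏ v ∈ Y \ S, (ρ * τ ^ w v)) *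
              ∏ _j ∈ (Finset.Icc 1 N \ S) \ (Y \ S), (1 - ρ)) := by ring
  rw [step1]
  have hskN : s k ≤ N := by
    have := hrange k hk le_rfl; simp only [Finset.mem_Icc] at this; exact this.2
  -- Part A: product over S
  have partA : (∏ v ∈ S, (ρ * τ ^ w v)) = τ ^ (k * (k + 1) / 2) * ρ ^ k := by
    rw [hSdef, Finset.prod_image (fun x hx y hy hxy => hinj hx hy hxy)]
    have : ∀ i ∈ Finset.Icc 1 k, ρ * τ ^ w (s i) = ρ * τ ^ (k + 1 - i) := by
      intro i hi
      simp only [Finset.mem_Icc] at hi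
      rw [hwS i hi.1 hi.2]
    rw [Finset.prod_congr rfl this, Finset.prod_mul_distrib, Finset.prod_const,
      Finset.prod_pow_eq_pow_sum, sba_gauss, Nat.card_Icc, Nat.add_sub_cancel]
    ring
  -- Part B: product over the complement
  set G : ℕ → ℂ := fun j => if j ∈ S then 1 else F j with hGdef
  have partB : (∏ j ∈ Finset.Icc 1 N \ S, F j)
      = ∏ i ∈ Finset.Icc 1 k, (1 - ρ + τ ^ (k - i + 1) * ρ) ^ (s i - s (i - 1) - 1) := by
    have hFG : (∏ j ∈ Finset.Icc 1 N \ S, F j) = ∏ j ∈ Finset.Icc 1 N, G j := by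
      have h1 : (∏ j ∈ Finset.Icc 1 N \ S, F j) = ∏ j ∈ Finset.Icc 1 N \ S, G j := by
        apply Finset.prod_congr rfl
        intro j hj
        simp only [Finset.mem_sdiff] at hj
        rw [hGdef]; simp only [if_neg hj.2]
      have h2 : (∏ j ∈ S, G j) = 1 := by
        apply Finset.prod_eq_one
        intro j hj
        rw [hGdef]; simp only [if_pos hj]
      rw [h1, ← Finset.prod_sdiff hSsub (f := G), h2, mul_one]
    rw [hFG, show Finset.Icc 1 N = Finset.Ioc 0 N from Finset.Icc_add_one_left_eq_Ioc 0 N,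
      ← Finset.prod_Ioc_consecutive G (Nat.zero_le (s k)) hskN]
    have htail : (∏ j ∈ Finset.Ioc (s k) N, G j) = 1 := by
      apply Finset.prod_eq_one
      intro j hj
      simp only [Finset.mem_Ioc] at hj
      have hjS : j ∉ S := by
        intro hjS
        simp only [hSdef, Finset.mem_image, Finset.mem_Icc] at hjS
        obtain ⟨m, hm, hms⟩ := hjS
        have := hle m k hm.2 le_rfl
        omega
      rw [hGdef]; simp only [if_neg hjS, hFdef]
      have hw0 : w j = 0 := by
        rw [hwdef]
        simp only [Finset.card_eq_zero]
        apply Finset.filter_eq_empty_iff.mpr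
        intro m hm
        simp only [Finset.mem_Icc] at hm
        have := hle m k hm.2 le_rfl
        omega
      rw [hw0]; ring
    rw [htail, mul_one, show (0:ℕ) = s 0 from hs0.symm,
      sba_prod_blocks s k hle G k le_rfl]
    apply Finset.prod_congr rfl
    intro i hi
    simp only [Finset.mem_Icc] at hi
    have hlt_i : s (i - 1) < s i := by
      have := hmono (i - 1) (by omega)
      have heq : i - 1 + 1 = i := by omega
      rwa [heq] at this
    rw [← Finset.Ioo_insert_right hlt_i, Finset.prod_insert (by simp)]
    have hGsi : G (s i) = 1 := by
      have : s i ∈ S := by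
        rw [hSdef]
        exact Finset.mem_image_of_mem s (Finset.mem_Icc.mpr ⟨hi.1, hi.2⟩)
      rw [hGdef]; simp only [if_pos this]
    rw [hGsi, one_mul]
    have hconst : ∀ j ∈ Finset.Ioo (s (i - 1)) (s i),
        G j = (1 - ρ + τ ^ (k - i + 1) * ρ) := by
      intro j hj
      simp only [Finset.mem_Ioo] at hj
      have hjS : j ∉ S := by
        intro hjS
        simp only [hSdef, Finset.mem_image, Finset.mem_Icc] at hjS
        obtain ⟨m, hm, hms⟩ := hjS
        rcases Nat.lt_or_ge m i with h | h
        · have : s m ≤ s (i - 1) := hle m (i - 1) (by omega) (by omega)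
          omega
        · have : s i ≤ s m := hle i m h hm.2
          omega
      have hwj : w j = k + 1 - i := by
        rw [hwdef]
        have hfil : (Finset.Icc 1 k).filter (fun m => j ≤ s m) = Finset.Icc i k := by
          ext m
          simp only [Finset.mem_filter, Finset.mem_Icc]
          constructor
          · rintro ⟨⟨hm1, hm2⟩, hm3⟩
            refine ⟨?_, hm2⟩
            by_contra h
            have : s m ≤ s (i - 1) := hle m (i - 1) (by omega) (by omega)
            omega
          · rintro ⟨hm1, hm2⟩
            refine ⟨⟨by omega, hm2⟩, ?_⟩
            have : s i ≤ s m := hle i m hm1 hm2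
            omega
        simp only []
        rw [hfil, Nat.card_Icc]
      rw [hGdef]
      simp only [if_neg hjS, hFdef]
      rw [hwj, show k + 1 - i = k - i + 1 by omega]
      ring
    rw [Finset.prod_congr rfl hconst, Finset.prod_const, Nat.card_Ioo]
  rw [partA, partB]
end

section
/- Let τ ∈ (0,1) and let μ ∈ ℂ with μ ≠ 0 and 1 - τ^k μ ≠ 0 for every integer k. Then for every z ∈ ℂ with 1 < |z| < τ^{-1}, the doubly infinite series f(μ,z) = ∑_{k ∈ ℤ} τ^k z^k / (1 - τ^k μ) converges absolutely; moreover, as z → 1 from above along the real axis, (1-z) f(μ,z) → 1/μ. In particular, f(μ,z) = μ^{-1}/(1-z) + O(1) as z → 1 with 1 < z < τ^{-1}: the function z ↦ f(μ,z) - μ^{-1}/(1-z) remains bounded on real z in an interval (1, 1+δ) for some δ > 0. -/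
lemma dgk_lower (τ : ℝ) (hτ0 : 0 < τ) (hτ1 : τ < 1)
    (μ : ℂ) (hμ : μ ≠ 0) (h : ∀ k : ℤ, 1 - (τ : ℂ) ^ k * μ ≠ 0) :
    ∃ c > 0, ∀ k : ℤ, c * (1 + τ ^ k * ‖μ‖) ≤ ‖1 - (τ : ℂ) ^ k * μ‖ := by
  have hμ' : 0 < ‖μ‖ := norm_pos_iff.mpr hμ
  obtain ⟨N, hN⟩ := exists_pow_lt_of_lt_one (lt_min (by positivity) (by positivity) :
    (0:ℝ) < min ((2 * ‖μ‖)⁻¹) (‖μ‖ / 2)) hτ1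
  have hN1 : τ ^ N < (2 * ‖μ‖)⁻¹ := lt_of_lt_of_le hN (min_le_left _ _)
  have hN2 : τ ^ N < ‖μ‖ / 2 := lt_of_lt_of_le hN (min_le_right _ _)
  have hnorm : ∀ k : ℤ, ‖(τ:ℂ) ^ k * μ‖ = τ ^ k * ‖μ‖ := by
    intro k
    rw [norm_mul, norm_zpow, Complex.norm_real, Real.norm_eq_abs, abs_of_pos hτ0]
  have hpow : ∀ k : ℤ, (0:ℝ) < τ ^ k := fun k => zpow_pos hτ0 k
  set s : Finset ℤ := Finset.Icc (-(N:ℤ)) N with hs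
  have hsne : s.Nonempty := ⟨0, by simp [hs]⟩
  set c₁ : ℝ := s.inf' hsne (fun k => ‖1 - (τ:ℂ) ^ k * μ‖ / (1 + τ ^ k * ‖μ‖)) with hc₁
  have hc₁pos : 0 < c₁ := by
    rw [hc₁, Finset.lt_inf'_iff]
    intro k _
    have := hpow k
    have h1 : 0 < ‖1 - (τ:ℂ) ^ k * μ‖ := norm_pos_iff.mpr (h k)
    positivity
  refine ⟨min c₁ (1/3), lt_min hc₁pos (by norm_num), fun k => ?_⟩
  have hden : (0:ℝ) < 1 + τ ^ k * ‖μ‖ := by have := hpow k; positivity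
  rcases le_or_gt (N:ℤ) k with hk | hk
  · -- τ^k small
    have hle : τ ^ k ≤ τ ^ (N:ℤ) := zpow_le_zpow_right_of_le_one₀ hτ0 hτ1.le hk
    have : τ ^ k * ‖μ‖ ≤ 1/2 := by
      have : τ ^ (N:ℤ) * ‖μ‖ < 1/2 := by
        rw [zpow_natCast]
        rw [inv_eq_one_div, lt_div_iff₀ (by positivity)] at hN1
        nlinarith
      nlinarith [mul_le_mul_of_nonneg_right hle (norm_nonneg μ)]
    have hlb : 1 - τ ^ k * ‖μ‖ ≤ ‖1 - (τ:ℂ) ^ k * μ‖ := by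
      calc 1 - τ ^ k * ‖μ‖ = ‖(1:ℂ)‖ - ‖(τ:ℂ) ^ k * μ‖ := by rw [hnorm k, norm_one]
      _ ≤ ‖1 - (τ:ℂ) ^ k * μ‖ := norm_sub_norm_le _ _
    have : min c₁ (1/3) ≤ 1/3 := min_le_right _ _
    nlinarith
  rcases le_or_gt k (-(N:ℤ)) with hk2 | hk2
  · -- τ^k large
    have hle : τ ^ (-(N:ℤ)) ≤ τ ^ k := zpow_le_zpow_right_of_le_one₀ hτ0 hτ1.le hk2
    have h2 : (2:ℝ) ≤ τ ^ k * ‖μ‖ := by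
      have hNpos : (0:ℝ) < τ ^ N := pow_pos hτ0 N
      have heq : τ ^ (-(N:ℤ)) = (τ ^ N)⁻¹ := by rw [zpow_neg, zpow_natCast]
      rw [heq] at hle
      have h3 : 2 / ‖μ‖ ≤ τ ^ k := by
        refine le_trans ?_ hle
        rw [div_le_iff₀ hμ', inv_mul_eq_div, le_div_iff₀ hNpos]
        nlinarith
      have := mul_le_mul_of_nonneg_right h3 (norm_nonneg μ)
      rwa [div_mul_cancel₀ _ hμ'.ne'] at this
    have hlb : τ ^ k * ‖μ‖ - 1 ≤ ‖1 - (τ:ℂ) ^ k * μ‖ := by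
      calc τ ^ k * ‖μ‖ - 1 = ‖(τ:ℂ) ^ k * μ‖ - ‖(1:ℂ)‖ := by rw [hnorm k, norm_one]
      _ ≤ ‖(τ:ℂ) ^ k * μ - 1‖ := norm_sub_norm_le _ _
      _ = ‖1 - (τ:ℂ) ^ k * μ‖ := by rw [← norm_neg]; ring_nf
    have : min c₁ (1/3) ≤ 1/3 := min_le_right _ _
    nlinarith
  · -- middle
    have hks : k ∈ s := by
      rw [hs, Finset.mem_Icc]
      omega
    have := Finset.inf'_le (fun k => ‖1 - (τ:ℂ) ^ k * μ‖ / (1 + τ ^ k * ‖μ‖)) hks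
    rw [← hc₁] at this
    have h4 : c₁ * (1 + τ ^ k * ‖μ‖) ≤ ‖1 - (τ:ℂ) ^ k * μ‖ := by
      rw [← le_div_iff₀ hden]; exact this
    have : min c₁ (1/3) ≤ c₁ := min_le_left _ _
    nlinarith

/-- The deformed geometric kernel `f(μ,z) = ∑_{k ∈ ℤ} τ^k z^k / (1 - τ^k μ)`: for
`τ ∈ (0,1)`, `μ ≠ 0` with `1 - τ^k μ ≠ 0` for all `k ∈ ℤ`, the series converges
absolutely for `1 < |z| < τ⁻¹`; as `z → 1⁺` along the real axis,
`(1-z) f(μ,z) → 1/μ`; and `f(μ,z) - μ⁻¹/(1-z)` stays bounded for real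
`z ∈ (1, 1+δ)` for some `δ > 0`. -/
theorem deformed_geometric_kernel (τ : ℝ) (hτ0 : 0 < τ) (hτ1 : τ < 1)
    (μ : ℂ) (hμ : μ ≠ 0) (h : ∀ k : ℤ, 1 - (τ : ℂ) ^ k * μ ≠ 0) :
    (∀ z : ℂ, 1 < ‖z‖ → ‖z‖ < τ⁻¹ →
      Summable (fun k : ℤ => ‖(τ : ℂ) ^ k * z ^ k / (1 - (τ : ℂ) ^ k * μ)‖)) ∧
    Filter.Tendsto
      (fun z : ℝ =>
        (1 - (z : ℂ)) * ∑' k : ℤ, (τ : ℂ) ^ k * (z : ℂ) ^ k / (1 - (τ : ℂ) ^ k * μ))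
      (nhdsWithin 1 (Set.Ioi 1)) (nhds μ⁻¹) ∧
    ∃ δ > 0, ∃ M : ℝ, ∀ z : ℝ, 1 < z → z < 1 + δ →
      ‖(∑' k : ℤ, (τ : ℂ) ^ k * (z : ℂ) ^ k / (1 - (τ : ℂ) ^ k * μ)) -
          μ⁻¹ / (1 - (z : ℂ))‖ ≤ M := by
  obtain ⟨c, hc0, hcb⟩ := dgk_lower τ hτ0 hτ1 μ hμ h
  have hμ' : 0 < ‖μ‖ := norm_pos_iff.mpr hμ
  have hpow : ∀ k : ℤ, (0:ℝ) < τ ^ k := fun k => zpow_pos hτ0 k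
  have hcge : ∀ k : ℤ, c ≤ ‖1 - (τ:ℂ) ^ k * μ‖ := by
    intro k
    refine le_trans ?_ (hcb k)
    nlinarith [hpow k, norm_nonneg μ, mul_pos (hpow k) hμ']
  have hc2 : ∀ k : ℤ, c * (τ ^ k * ‖μ‖) ≤ ‖1 - (τ:ℂ) ^ k * μ‖ := by
    intro k
    refine le_trans ?_ (hcb k)
    nlinarith [hpow k, mul_pos (hpow k) hμ']
  have hnt : ∀ (k : ℤ) (w : ℂ),
      ‖(τ:ℂ) ^ k * w ^ k / (1 - (τ:ℂ) ^ k * μ)‖ = τ ^ k * ‖w‖ ^ k / ‖1 - (τ:ℂ) ^ k * μ‖ := by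
    intro k w
    rw [norm_div, norm_mul, norm_zpow, norm_zpow, Complex.norm_real, Real.norm_eq_abs,
      abs_of_pos hτ0]
  -- Part 1
  have part1 : ∀ z : ℂ, 1 < ‖z‖ → ‖z‖ < τ⁻¹ →
      Summable (fun k : ℤ => ‖(τ : ℂ) ^ k * z ^ k / (1 - (τ : ℂ) ^ k * μ)‖) := by
    intro z hz1 hz2
    have hzpos : (0:ℝ) < ‖z‖ := by linarith
    have hτz : τ * ‖z‖ < 1 := by
      rw [inv_eq_one_div, lt_div_iff₀ hτ0] at hz2
      nlinarith
    have hinv : ‖z‖⁻¹ < 1 := by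
      rw [inv_lt_one_iff₀]; right; exact hz1
    apply Summable.of_nat_of_neg
    · refine Summable.of_nonneg_of_le (fun n => norm_nonneg _) (fun n => ?_)
        ((summable_geometric_of_lt_one (by positivity) hτz).mul_left c⁻¹)
      rw [hnt]
      calc τ ^ (n:ℤ) * ‖z‖ ^ (n:ℤ) / ‖1 - (τ:ℂ) ^ (n:ℤ) * μ‖
          ≤ τ ^ (n:ℤ) * ‖z‖ ^ (n:ℤ) / c := by
            gcongr
            exact hcge _
        _ = c⁻¹ * (τ * ‖z‖) ^ n := by
            rw [zpow_natCast, zpow_natCast, mul_pow]; ring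
    · refine Summable.of_nonneg_of_le (fun n => norm_nonneg _) (fun n => ?_)
        ((summable_geometric_of_lt_one (by positivity) hinv).mul_left ((c * ‖μ‖)⁻¹))
      rw [hnt]
      calc τ ^ (-n:ℤ) * ‖z‖ ^ (-n:ℤ) / ‖1 - (τ:ℂ) ^ (-n:ℤ) * μ‖
          ≤ τ ^ (-n:ℤ) * ‖z‖ ^ (-n:ℤ) / (c * (τ ^ (-n:ℤ) * ‖μ‖)) := by
            gcongr
            exact hc2 _
        _ = (c * ‖μ‖)⁻¹ * (‖z‖⁻¹) ^ n := by
            rw [zpow_neg, zpow_neg, zpow_natCast, zpow_natCast, inv_pow]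
            have h1 : τ ^ n ≠ 0 := by positivity
            have h2 : ‖z‖ ^ n ≠ 0 := by positivity
            field_simp
  -- setup for parts 2, 3
  have hτinv : 1 < τ⁻¹ := (one_lt_inv₀ hτ0).mpr hτ1
  set z₀ : ℝ := (1 + τ⁻¹) / 2 with hz₀
  have hz₀1 : 1 < z₀ := by rw [hz₀]; linarith
  have hz₀2 : z₀ < τ⁻¹ := by rw [hz₀]; linarith
  have hτz₀ : τ * z₀ < 1 := by
    rw [inv_eq_one_div, lt_div_iff₀ hτ0] at hz₀2
    nlinarith
  set M₁ : ℝ := c⁻¹ * (1 - τ * z₀)⁻¹ with hM₁def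
  set M₂ : ℝ := (c * ‖μ‖ ^ 2)⁻¹ * (τ * (1 - τ)⁻¹) with hM₂def
  have hM₁ : HasSum (fun n : ℕ => c⁻¹ * (τ * z₀) ^ n) M₁ :=
    (hasSum_geometric_of_lt_one (by positivity) hτz₀).mul_left c⁻¹
  have hM₂ : HasSum (fun n : ℕ => (c * ‖μ‖ ^ 2)⁻¹ * τ ^ (n + 1)) M₂ := by
    have := ((hasSum_geometric_of_lt_one hτ0.le hτ1).mul_left τ).mul_left (c * ‖μ‖ ^ 2)⁻¹
    convert this using 2 with n
    · rfl
    ring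
  have key : ∀ z : ℝ, 1 < z → z < z₀ →
      ∃ G : ℂ, ‖G‖ ≤ M₁ + M₂ ∧
        (∑' k : ℤ, (τ : ℂ) ^ k * (z : ℂ) ^ k / (1 - (τ : ℂ) ^ k * μ)) =
          G + μ⁻¹ / (1 - (z : ℂ)) := by
    intro z h1 h2
    have hz0 : (0:ℝ) < z := by linarith
    have hznorm : ‖(z:ℂ)‖ = z := by
      rw [Complex.norm_real, Real.norm_eq_abs, abs_of_pos hz0]
    have hzC : (z:ℂ) ≠ 0 := Complex.ofReal_ne_zero.mpr (by linarith)
    have hz1C : (z:ℂ) - 1 ≠ 0 := by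
      rw [sub_ne_zero]
      exact_mod_cast (by linarith : z ≠ 1)
    -- positive part
    have hPle : ∀ n : ℕ, ‖(τ:ℂ) ^ (n:ℤ) * (z:ℂ) ^ (n:ℤ) / (1 - (τ:ℂ) ^ (n:ℤ) * μ)‖
        ≤ c⁻¹ * (τ * z₀) ^ n := by
      intro n
      rw [hnt, hznorm, show (τ:ℝ) ^ (n:ℤ) = τ ^ n from zpow_natCast τ n,
        show z ^ (n:ℤ) = z ^ n from zpow_natCast z n]
      calc τ ^ n * z ^ n / ‖1 - (τ:ℂ) ^ (n:ℤ) * μ‖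
          ≤ τ ^ n * z₀ ^ n / c := by
            refine div_le_div₀ (by positivity) ?_ hc0 (hcge _)
            exact mul_le_mul_of_nonneg_left (pow_le_pow_left₀ hz0.le h2.le n) (by positivity)
        _ = c⁻¹ * (τ * z₀) ^ n := by
            rw [mul_pow]; ring
    have hPsum : Summable (fun n : ℕ =>
        (τ:ℂ) ^ (n:ℤ) * (z:ℂ) ^ (n:ℤ) / (1 - (τ:ℂ) ^ (n:ℤ) * μ)) :=
      Summable.of_norm_bounded hM₁.summable hPle
    have hPnorm : ‖∑' n : ℕ, (τ:ℂ) ^ (n:ℤ) * (z:ℂ) ^ (n:ℤ) / (1 - (τ:ℂ) ^ (n:ℤ) * μ)‖ ≤ M₁ :=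
      tsum_of_norm_bounded hM₁ hPle
    -- Q part
    set Q : ℕ → ℂ := fun n =>
      (z:ℂ) ^ (-((n:ℤ) + 1)) / (μ * (1 - (τ:ℂ) ^ (-((n:ℤ) + 1)) * μ)) with hQdef
    have hQle : ∀ n : ℕ, ‖Q n‖ ≤ (c * ‖μ‖ ^ 2)⁻¹ * τ ^ (n + 1) := by
      intro n
      rw [hQdef]
      have hD := hc2 (-((n:ℤ) + 1))
      have hτe : (0:ℝ) < τ ^ (-((n:ℤ) + 1)) := hpow _
      have hzle : (z:ℝ) ^ (-((n:ℤ) + 1)) ≤ 1 := by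
        rw [zpow_neg]
        rw [inv_le_one_iff₀]; right
        exact one_le_zpow₀ h1.le (by positivity)
      calc ‖(z:ℂ) ^ (-((n:ℤ) + 1)) / (μ * (1 - (τ:ℂ) ^ (-((n:ℤ) + 1)) * μ))‖
          = z ^ (-((n:ℤ) + 1)) / (‖μ‖ * ‖1 - (τ:ℂ) ^ (-((n:ℤ) + 1)) * μ‖) := by
            rw [norm_div, norm_mul, norm_zpow, hznorm]
        _ ≤ 1 / (‖μ‖ * (c * (τ ^ (-((n:ℤ) + 1)) * ‖μ‖))) := by
            refine div_le_div₀ zero_le_one hzle (by positivity) ?_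
            exact mul_le_mul_of_nonneg_left hD (norm_nonneg μ)
        _ = (c * ‖μ‖ ^ 2)⁻¹ * τ ^ (n + 1) := by
            have he : τ ^ (-((n:ℤ) + 1)) = (τ ^ (n + 1))⁻¹ := by
              rw [zpow_neg]
              norm_cast
            rw [he]
            have h1' : τ ^ (n+1) ≠ 0 := by positivity
            field_simp
    have hQsum : Summable Q := Summable.of_norm_bounded hM₂.summable hQle
    have hQnorm : ‖∑' n, Q n‖ ≤ M₂ := tsum_of_norm_bounded hM₂ hQle
    -- geometric part
    have hrnorm : ‖(z:ℂ)⁻¹‖ < 1 := by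
      rw [norm_inv, hznorm, inv_lt_one_iff₀]; right; exact h1
    have hzinv : (1:ℂ) - (z:ℂ)⁻¹ ≠ 0 := by
      have : ‖(1:ℂ) - (z:ℂ)⁻¹‖ > 0 := by
        have := norm_sub_norm_le (1:ℂ) ((z:ℂ)⁻¹)
        simp only [norm_one] at this
        linarith
      exact norm_pos_iff.mp this
    have hgeo : HasSum (fun n : ℕ => μ⁻¹ * ((z:ℂ)⁻¹) ^ (n + 1)) (μ⁻¹ * ((z:ℂ) - 1)⁻¹) := by
      have h0 := ((hasSum_geometric_of_norm_lt_one hrnorm).mul_left ((z:ℂ)⁻¹)).mul_left μ⁻¹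
      convert h0 using 2 with n
      · rfl
      · rw [pow_succ']
      · rw [← mul_inv]
        congr 1
        field_simp
    -- negative part
    have hfe : ∀ n : ℕ, Q n - μ⁻¹ * ((z:ℂ)⁻¹) ^ (n + 1) =
        (τ:ℂ) ^ (-((n:ℤ) + 1)) * (z:ℂ) ^ (-((n:ℤ) + 1)) / (1 - (τ:ℂ) ^ (-((n:ℤ) + 1)) * μ) := by
      intro n
      rw [hQdef]
      have hzp : ((z:ℂ)⁻¹) ^ (n + 1) = (z:ℂ) ^ (-((n:ℤ) + 1)) := by
        rw [zpow_neg, inv_pow]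
        norm_cast
      rw [hzp]
      have hD := h (-((n:ℤ) + 1))
      set a := (τ:ℂ) ^ (-((n:ℤ) + 1)) with ha
      set b := (z:ℂ) ^ (-((n:ℤ) + 1)) with hb
      have h2 : (μ * (1 - a * μ))⁻¹ - μ⁻¹ = a / (1 - a * μ) := by
        rw [eq_div_iff hD, mul_inv, sub_mul, mul_assoc, inv_mul_cancel₀ hD, mul_one,
          mul_sub, mul_one, sub_sub_cancel, mul_comm a μ, ← mul_assoc,
          inv_mul_cancel₀ hμ, one_mul]
      calc b / (μ * (1 - a * μ)) - μ⁻¹ * b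
          = b * ((μ * (1 - a * μ))⁻¹ - μ⁻¹) := by rw [div_eq_mul_inv, mul_sub]; ring
        _ = b * (a / (1 - a * μ)) := by rw [h2]
        _ = a * b / (1 - a * μ) := by ring
    have hneg : HasSum (fun n : ℕ =>
        (τ:ℂ) ^ (-((n:ℤ) + 1)) * (z:ℂ) ^ (-((n:ℤ) + 1)) / (1 - (τ:ℂ) ^ (-((n:ℤ) + 1)) * μ))
        ((∑' n, Q n) - μ⁻¹ * ((z:ℂ) - 1)⁻¹) :=
      funext hfe ▸ (hQsum.hasSum.sub hgeo)
    have htot : HasSum (fun k : ℤ => (τ:ℂ) ^ k * (z:ℂ) ^ k / (1 - (τ:ℂ) ^ k * μ))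
        ((∑' n : ℕ, (τ:ℂ) ^ (n:ℤ) * (z:ℂ) ^ (n:ℤ) / (1 - (τ:ℂ) ^ (n:ℤ) * μ)) +
          ((∑' n, Q n) - μ⁻¹ * ((z:ℂ) - 1)⁻¹)) :=
      HasSum.of_nat_of_neg_add_one hPsum.hasSum hneg
    refine ⟨(∑' n : ℕ, (τ:ℂ) ^ (n:ℤ) * (z:ℂ) ^ (n:ℤ) / (1 - (τ:ℂ) ^ (n:ℤ) * μ)) + ∑' n, Q n,
      le_trans (norm_add_le _ _) (add_le_add hPnorm hQnorm), ?_⟩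
    rw [htot.tsum_eq]
    have hinv1z : μ⁻¹ / (1 - (z:ℂ)) = -(μ⁻¹ * ((z:ℂ) - 1)⁻¹) := by
      rw [div_eq_mul_inv, show (1 - (z:ℂ)) = -((z:ℂ) - 1) by ring, inv_neg]
      ring
    rw [hinv1z]
    ring
  refine ⟨part1, ?_, ?_⟩
  · -- Part 2
    rw [← tendsto_sub_nhds_zero_iff]
    apply squeeze_zero_norm' (a := fun z : ℝ => ‖1 - (z:ℂ)‖ * (M₁ + M₂))
    · filter_upwards [Ioo_mem_nhdsGT_of_mem (⟨le_refl 1, hz₀1⟩ : (1:ℝ) ∈ Set.Ico 1 z₀)]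
        with z hz
      obtain ⟨G, hG, heq⟩ := key z hz.1 hz.2
      rw [heq]
      have h1z : (1:ℂ) - (z:ℂ) ≠ 0 := by
        rw [sub_ne_zero]
        exact fun hh => absurd (Complex.ofReal_injective hh.symm) (by linarith [hz.1] : ¬z = 1)
      have hexp : (1 - (z:ℂ)) * (G + μ⁻¹ / (1 - (z:ℂ))) - μ⁻¹ = (1 - (z:ℂ)) * G := by
        rw [mul_add, ← mul_div_assoc, mul_comm (1 - (z:ℂ)) μ⁻¹, mul_div_assoc,
          div_self h1z, mul_one]
        ring
      rw [hexp, norm_mul]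
      exact mul_le_mul_of_nonneg_left hG (norm_nonneg _)
    · have hcont : Filter.Tendsto (fun z : ℝ => ‖1 - (z:ℂ)‖ * (M₁ + M₂)) (nhds 1)
          (nhds (‖1 - ((1:ℝ):ℂ)‖ * (M₁ + M₂))) :=
        Continuous.tendsto (((continuous_const.sub Complex.continuous_ofReal).norm).mul continuous_const) 1
      have h0 : ‖1 - ((1:ℝ):ℂ)‖ * (M₁ + M₂) = 0 := by simp
      rw [h0] at hcont
      exact hcont.mono_left nhdsWithin_le_nhds
  · -- Part 3
    refine ⟨z₀ - 1, by linarith, M₁ + M₂, fun z h1 h2 => ?_⟩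
    obtain ⟨G, hG, heq⟩ := key z h1 (by linarith)
    rw [heq, add_sub_cancel_right]
    exact hG
end
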